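/- Let Γ be an infinite, connected, locally finite graph equipped with a cobounded quasi-action of a group G, and suppose vs(Γ) > 1. Then Γ contains exactly one maximal infinite 2-connected subgraph Γ₀, and there is a constant C such that every vertex of Γ lies within distance C of a vertex of Γ₀; consequently the inclusion of V(Γ₀), with the intrinsic graph metric of Γ₀, into V(Γ) is a quasi-isometry. -/

import Mathlib

open SimpleGraph

namespace Paper

variable {V W : Type*}

/-- Locally finite graph: every vertex has finite degree. -/
def LocFin (G : SimpleGraph V) : Prop := ∀ v : V, (G.neighborSet v).Finite

/-- All vertex degrees are at most `d`. -/
def DegLe (G : SimpleGraph V) (d : ℕ) : Prop :=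
  ∀ v : V, (G.neighborSet v).Finite ∧ (G.neighborSet v).ncard ≤ d

/-- Bounded valence. -/
def BddVal (G : SimpleGraph V) : Prop := ∃ d : ℕ, DegLe G d

/-- `(l, e)`-quasi-isometric embedding between the vertex sets of two graphs. -/
def IsQIE (G : SimpleGraph V) (H : SimpleGraph W) (l e : ℝ) (f : V → W) : Prop :=
  ∀ x y : V,
    (G.dist x y : ℝ) / l - e ≤ (H.dist (f x) (f y) : ℝ) ∧
      (H.dist (f x) (f y) : ℝ) ≤ l * (G.dist x y : ℝ) + e

/-- Coarse surjectivity: every vertex of the target lies within distance `e` of the image. -/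
def CoarseSurj (H : SimpleGraph W) (e : ℝ) (f : V → W) : Prop :=
  ∀ w : W, ∃ x : V, (H.dist w (f x) : ℝ) ≤ e

/-- `(l, e)`-quasi-isometry. -/
def IsQI (G : SimpleGraph V) (H : SimpleGraph W) (l e : ℝ) (f : V → W) : Prop :=
  IsQIE G H l e f ∧ CoarseSurj H e f

/-- `g` is an `h`-quasi-inverse of `f`. -/
def IsQInv (G : SimpleGraph V) (h : ℝ) (f : V → W) (g : W → V) : Prop :=
  ∀ x : V, (G.dist (g (f x)) x : ℝ) ≤ h

/-- Reachability by a walk all of whose vertices avoid the set `S`. -/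
def ReachOut (G : SimpleGraph V) (S : Set V) (a b : V) : Prop :=
  ∃ w : G.Walk a b, ∀ v ∈ w.support, v ∉ S

/-- A one-way infinite simple ray. -/
def RayIn (G : SimpleGraph V) (r : ℕ → V) : Prop :=
  Function.Injective r ∧ ∀ n : ℕ, G.Adj (r n) (r (n + 1))

/-- End-equivalence of rays: for every finite vertex set they have tails in the same
connected component of the graph with that set deleted. -/
def EndEquiv (G : SimpleGraph V) (r₁ r₂ : ℕ → V) : Prop :=
  ∀ S : Set V, S.Finite → ∃ N : ℕ, ∀ m n : ℕ, N ≤ m → N ≤ n → ReachOut G S (r₁ m) (r₂ n)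

/-- Two points (encoded as sequences: a constant sequence for a vertex, a ray for an end)
lie in distinct connected components of `G` with the vertex set `S` deleted. -/
def SepComps (G : SimpleGraph V) (S : Set V) (a b : ℕ → V) : Prop :=
  ∃ N : ℕ,
    (∀ m n : ℕ, N ≤ m → N ≤ n → ReachOut G S (a m) (a n)) ∧
    (∀ m n : ℕ, N ≤ m → N ≤ n → ReachOut G S (b m) (b n)) ∧
    (∀ m n : ℕ, N ≤ m → N ≤ n → ¬ ReachOut G S (a m) (b n))

/-- `vs(G) ≥ N`: any vertex set separating two ends has at least `N` elements. -/
def VsGe (G : SimpleGraph V) (N : ℕ) : Prop :=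
  ∀ r₁ r₂ : ℕ → V, RayIn G r₁ → RayIn G r₂ →
    ∀ S : Set V, S.Finite → SepComps G S r₁ r₂ → N ≤ S.ncard

/-- `vs(G) ≥ c` for a real threshold `c`. -/
def VsGeR (G : SimpleGraph V) (c : ℝ) : Prop :=
  ∀ r₁ r₂ : ℕ → V, RayIn G r₁ → RayIn G r₂ →
    ∀ S : Set V, S.Finite → SepComps G S r₁ r₂ → c ≤ (S.ncard : ℝ)

/-- `U` is a connected component of `G` with the vertex set `A` deleted. -/
def IsCompOut (G : SimpleGraph V) (A U : Set V) : Prop :=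
  ∃ a ∈ U, ∀ b : V, ReachOut G A a b ↔ b ∈ U

/-- The edge coboundary `δb` of a vertex set `b`. -/
def cob (G : SimpleGraph V) (b : Set V) : Set (Sym2 V) :=
  {e | ∃ x y : V, e = s(x, y) ∧ G.Adj x y ∧ x ∈ b ∧ y ∉ b}

/-- Membership in the Boolean ring `𝓑G` of vertex sets with finite coboundary. -/
def MemBX (G : SimpleGraph V) (b : Set V) : Prop := (cob G b).Finite

/-- The set of endpoints of the edges of `δb`. -/
def cobVerts (G : SimpleGraph V) (b : Set V) : Set V :=
  {v | ∃ w : V, s(v, w) ∈ cob G b}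

/-- A tight element: both sides induce connected subgraphs. -/
def Tight (G : SimpleGraph V) (b : Set V) : Prop :=
  (G.induce b).Connected ∧ (G.induce bᶜ).Connected

/-- Vertices of `A` that are endpoints of an edge with the other endpoint in `U`. -/
def AttachSet (G : SimpleGraph V) (A U : Set V) : Set V :=
  {v | v ∈ A ∧ ∃ u ∈ U, G.Adj v u}

/-- `incut(A) ≤ k` for a vertex set `A`, with the intrinsic metric of `G.induce A`. -/
def IncutBddSet (G : SimpleGraph V) (A : Set V) (k : ℕ) : Prop :=
  ∀ U : Set V, IsCompOut G A U →
    ∀ v w : A, (v : V) ∈ AttachSet G A U → (w : V) ∈ AttachSet G A U →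
      (G.induce A).dist v w ≤ k

/-- `outcut(A) ≤ k` for a vertex set `A`. -/
def OutcutBddSet (G : SimpleGraph V) (A : Set V) (k : ℕ) : Prop :=
  ∀ U : Set V, IsCompOut G A U → IncutBddSet G U k

/-- Uniform coboundary for a vertex set. -/
def UnifCobSet (G : SimpleGraph V) (A : Set V) : Prop :=
  (∃ k : ℕ, IncutBddSet G A k) ∧ (∃ k : ℕ, OutcutBddSet G A k)

/-- `incut(L) ≤ k` for a subgraph `L`, with its own intrinsic metric. -/
def IncutBddSub (G : SimpleGraph V) (L : G.Subgraph) (k : ℕ) : Prop :=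
  ∀ U : Set V, IsCompOut G L.verts U →
    ∀ v w : L.verts, (v : V) ∈ AttachSet G L.verts U → (w : V) ∈ AttachSet G L.verts U →
      L.coe.dist v w ≤ k

/-- `outcut(L) ≤ k` for a subgraph `L`. -/
def OutcutBddSub (G : SimpleGraph V) (L : G.Subgraph) (k : ℕ) : Prop :=
  ∀ U : Set V, IsCompOut G L.verts U → IncutBddSet G U k

/-- Uniform coboundary for a subgraph. -/
def UnifCobSub (G : SimpleGraph V) (L : G.Subgraph) : Prop :=
  (∃ k : ℕ, IncutBddSub G L k) ∧ (∃ k : ℕ, OutcutBddSub G L k)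

/-- Quasi-transitive graph: the automorphism group has finitely many orbits of vertices. -/
def QuasiTransitive (G : SimpleGraph V) : Prop :=
  ∃ F : Set V, F.Finite ∧ ∀ v : V, ∃ e : G ≃g G, ∃ w ∈ F, e w = v

/-- Hausdorff distance between two vertex sets is at most `r`. -/
def HausBdd (G : SimpleGraph V) (A B : Set V) (r : ℝ) : Prop :=
  (∀ a ∈ A, ∃ b ∈ B, (G.dist a b : ℝ) ≤ r) ∧ (∀ b ∈ B, ∃ a ∈ A, (G.dist a b : ℝ) ≤ r)

/-- Reachability by a walk avoiding the edge set `F`. -/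
def ReachAvoidE (G : SimpleGraph V) (F : Set (Sym2 V)) (a b : V) : Prop :=
  ∃ w : G.Walk a b, ∀ e ∈ w.edges, e ∉ F

/-- The ends of the rays `r₁`, `r₂` are separated by deleting the edge set `F`. -/
def SepEnds (G : SimpleGraph V) (F : Set (Sym2 V)) (r₁ r₂ : ℕ → V) : Prop :=
  ∃ N : ℕ, ∀ m n : ℕ, N ≤ m → N ≤ n → ¬ ReachAvoidE G F (r₁ m) (r₂ n)

/-- Accessibility: some `k ≥ 1` such that any two distinct ends can be separated by
deleting at most `k` edges. -/
def Accessible (G : SimpleGraph V) : Prop :=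
  ∃ k : ℕ, 1 ≤ k ∧ ∀ r₁ r₂ : ℕ → V, RayIn G r₁ → RayIn G r₂ → ¬ EndEquiv G r₁ r₂ →
    ∃ F : Set (Sym2 V), F.Finite ∧ F.ncard ≤ k ∧ SepEnds G F r₁ r₂

/-- `l`-quasi-action of a group on the vertex set of a graph. -/
def IsQAct {G₀ : Type*} [Group G₀] (G : SimpleGraph V) (l : ℝ) (φ : G₀ → V → V) : Prop :=
  (∀ g : G₀, IsQI G G l l (φ g)) ∧
  (∀ (g h : G₀) (x : V), (G.dist (φ (g * h) x) (φ g (φ h x)) : ℝ) ≤ l) ∧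
  (∀ g : G₀, IsQInv G l (φ g) (φ g⁻¹) ∧ IsQInv G l (φ g⁻¹) (φ g))

/-- `B`-cobounded quasi-action. -/
def Cobdd {G₀ : Type*} [Group G₀] (G : SimpleGraph V) (B : ℝ) (φ : G₀ → V → V) : Prop :=
  ∀ x y : V, ∃ g : G₀, (G.dist x (φ g y) : ℝ) ≤ B

/-- The diameter (in `ℕ`) of a vertex set. -/
noncomputable def setDiam (G : SimpleGraph V) (S : Set V) : ℕ :=
  sSup {d : ℕ | ∃ x ∈ S, ∃ y ∈ S, G.dist x y = d}

/-- 2-connected: connected, at least three vertices, and deleting any single vertex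
leaves it connected. -/
def TwoConnected (G : SimpleGraph V) : Prop :=
  G.Connected ∧ (∃ a b c : V, a ≠ b ∧ a ≠ c ∧ b ≠ c) ∧
    ∀ v : V, (G.induce {w : V | w ≠ v}).Connected

/-- Tree decomposition. -/
def IsTreeDecomp {VT : Type*} (X : SimpleGraph V) (T : SimpleGraph VT) (B : VT → Set V) :
    Prop :=
  T.IsTree ∧ (∀ x : V, ∃ u : VT, x ∈ B u) ∧
    ∀ u v w : VT, (∃ p : T.Walk u w, p.IsPath ∧ v ∈ p.support) → B u ∩ B w ⊆ B v

/-- Bounded adhesion. -/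
def BddAdhesion {VT : Type*} (T : SimpleGraph VT) (B : VT → Set V) : Prop :=
  ∃ N : ℕ, ∀ u w : VT, T.Adj u w → (B u ∩ B w).Finite ∧ (B u ∩ B w).ncard ≤ N

/-- Connected parts. -/
def ConnParts {VT : Type*} (X : SimpleGraph V) (B : VT → Set V) : Prop :=
  ∀ u : VT, (X.induce (B u)).Connected

/-- Replacing each bag by its closed `r`-neighbourhood. -/
def ballBag {VT : Type*} (X : SimpleGraph V) (B : VT → Set V) (r : ℕ) : VT → Set V :=
  fun u => {x : V | ∃ y ∈ B u, X.dist x y ≤ r}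

/-- A point of `G` which is either a vertex lying outside `B(S;R)` (encoded as a constant
sequence) or an end (encoded as a ray representing it). -/
def PtSeq (G : SimpleGraph V) (S : Set V) (R : ℝ) (a : ℕ → V) : Prop :=
  (∃ v : V, a = Function.const ℕ v ∧ ∀ s ∈ S, R < (G.dist v s : ℝ)) ∨ RayIn G a

/-- A subring of `𝓑G`: contains `∅`, and is closed under intersection and
symmetric difference. -/
def IsSubring (G : SimpleGraph V) (R : Set (Set V)) : Prop :=
  (∀ b ∈ R, MemBX G b) ∧ ∅ ∈ R ∧
    (∀ a ∈ R, ∀ b ∈ R, a ∩ b ∈ R) ∧ (∀ a ∈ R, ∀ b ∈ R, symmDiff a b ∈ R)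

/-- The subring generated by a family. -/
def genSubring (G : SimpleGraph V) (E : Set (Set V)) : Set (Set V) :=
  ⋂₀ {R : Set (Set V) | IsSubring G R ∧ E ⊆ R}

/-- Two vertex sets are nested. -/
def Nested (a b : Set V) : Prop :=
  a ∩ b = ∅ ∨ a ∩ bᶜ = ∅ ∨ aᶜ ∩ b = ∅ ∨ aᶜ ∩ bᶜ = ∅

/-- A nested family: closed under complementation and pairwise nested. -/
def NestedFam (E : Set (Set V)) : Prop :=
  (∀ b ∈ E, bᶜ ∈ E) ∧ ∀ a ∈ E, ∀ b ∈ E, Nested a b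

/-- A `G₀`-invariant family of vertex sets. -/
def GInvFam (G₀ : Type*) [Group G₀] [MulAction G₀ V] (E : Set (Set V)) : Prop :=
  ∀ g : G₀, ∀ b ∈ E, (fun x => g • x) '' b ∈ E

/-- A `G₀`-finite family of vertex sets: it meets only finitely many orbits. -/
def GFinFam (G₀ : Type*) [Group G₀] [MulAction G₀ V] (E : Set (Set V)) : Prop :=
  ∃ F : Set (Set V), F.Finite ∧ F ⊆ E ∧
    ∀ b ∈ E, ∃ g : G₀, ∃ c ∈ F, (fun x => g • x) '' c = b

/-- `g` stabilises the subgraph `L` setwise. -/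
def StabSub {G₀ : Type*} [Group G₀] [MulAction G₀ V] (G : SimpleGraph V) (g : G₀)
    (L : G.Subgraph) : Prop :=
  (∀ v : V, v ∈ L.verts ↔ g • v ∈ L.verts) ∧
    (∀ a b : V, L.Adj a b ↔ L.Adj (g • a) (g • b))

end Paper
section Aux
open Paper
open SimpleGraph

variable {V : Type*} (Γ : SimpleGraph V)

/-- The component of `x` in `Γ` with `S` deleted. -/
def Cpt (S : Set V) (x : V) : Set V := {w | ReachOut Γ S x w}

/-- `x` lies in a finite component of `Γ - v` (and differs from `v`): a "pocket". -/
def Pck (v x : V) : Prop := x ≠ v ∧ (Cpt Γ {v} x).Finite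

/-- Vertices not hidden in any pocket. -/
def CoreS : Set V := {x | ∀ v, ¬ Pck Γ v x}

/-- closed ballS -/
def ballS (o : V) (n : ℕ) : Set V := {w | Γ.dist o w ≤ n}

namespace Aux

variable {Γ}

lemma reachOut_refl {S : Set V} {x : V} (hx : x ∉ S) : ReachOut Γ S x x :=
  ⟨Walk.nil, by intro v hv; simp only [Walk.support_nil, List.mem_singleton] at hv; subst hv; exact hx⟩

lemma reachOut_symm {S : Set V} {x y : V} (h : ReachOut Γ S x y) : ReachOut Γ S y x := by
  obtain ⟨w, hw⟩ := h
  exact ⟨w.reverse, by intro v hv; rw [Walk.support_reverse, List.mem_reverse] at hv; exact hw v hv⟩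

lemma reachOut_trans {S : Set V} {x y z : V} (h : ReachOut Γ S x y) (h' : ReachOut Γ S y z) :
    ReachOut Γ S x z := by
  obtain ⟨w1, h1⟩ := h; obtain ⟨w2, h2⟩ := h'
  refine ⟨w1.append w2, ?_⟩
  intro v hv
  rcases (Walk.mem_support_append_iff _ _).1 hv with hv | hv
  · exact h1 v hv
  · exact h2 v hv

lemma reachOut_end_not_mem {S : Set V} {x y : V} (h : ReachOut Γ S x y) : y ∉ S := by
  obtain ⟨w, hw⟩ := h; exact hw y w.end_mem_support

lemma reachOut_start_not_mem {S : Set V} {x y : V} (h : ReachOut Γ S x y) : x ∉ S := by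
  obtain ⟨w, hw⟩ := h; exact hw x w.start_mem_support

lemma cmp_eq_of_reachOut {S : Set V} {x y : V} (h : ReachOut Γ S x y) :
    Cpt Γ S x = Cpt Γ S y := by
  ext w; exact ⟨fun hw => reachOut_trans (reachOut_symm h) hw, fun hw => reachOut_trans h hw⟩

lemma mem_cmp_self {S : Set V} {x : V} (hx : x ∉ S) : x ∈ Cpt Γ S x := reachOut_refl hx

lemma mem_cmp {S : Set V} {x w : V} : w ∈ Cpt Γ S x ↔ ReachOut Γ S x w := Iff.rfl

lemma reachOut_adj {S : Set V} {x y : V} (h : Γ.Adj x y) (hx : x ∉ S) (hy : y ∉ S) :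
    ReachOut Γ S x y := by
  refine ⟨Walk.cons h Walk.nil, ?_⟩
  intro v hv
  simp only [Walk.support_cons, Walk.support_nil, List.mem_cons, List.mem_singleton,
    List.not_mem_nil, or_false] at hv
  rcases hv with rfl | rfl
  · exact hx
  · exact hy

/-- every vertex on an S-avoiding walk from x is in x's component -/
lemma support_mem_cmp {S : Set V} {x y : V} (w : Γ.Walk x y) (hw : ∀ v ∈ w.support, v ∉ S)
    {u : V} (hu : u ∈ w.support) : u ∈ Cpt Γ S x := by
  classical
  exact ⟨w.takeUntil u hu, fun v hv => hw v (Walk.support_takeUntil_subset _ _ hv)⟩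

lemma dist_support_le {x y u : V} (w : Γ.Walk x y) (hu : u ∈ w.support) :
    Γ.dist x u ≤ w.length := by
  classical
  exact le_trans (SimpleGraph.dist_le (w.takeUntil u hu)) (Walk.length_takeUntil_le _ _)

variable (hc : Γ.Connected) (hlf : LocFin Γ)
include hc

lemma dist_eq_zero_iff' {x y : V} : Γ.dist x y = 0 ↔ x = y := hc.dist_eq_zero_iff

include hlf in
lemma ball_finite (o : V) (n : ℕ) : (ballS Γ o n).Finite := by
  induction n with
  | zero =>
    have : ballS Γ o 0 ⊆ {o} := by
      intro w hw
      have : Γ.dist o w = 0 := Nat.le_zero.1 hw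
      simp [((hc.dist_eq_zero_iff).1 this).symm]
    exact (Set.finite_singleton o).subset this
  | succ n ih =>
    have hsub : ballS Γ o (n+1) ⊆ ballS Γ o n ∪ ⋃ u ∈ ballS Γ o n, Γ.neighborSet u := by
      intro w hw
      rcases Nat.lt_or_ge (Γ.dist o w) (n+1) with h | h
      · exact Or.inl (Nat.lt_succ_iff.1 h)
      · have hd : Γ.dist o w = n + 1 := le_antisymm hw h
        obtain ⟨p, hp⟩ := hc.exists_walk_length_eq_dist w o
        have hplen : p.length = n + 1 := by rw [hp, SimpleGraph.dist_comm, hd]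
        -- p : walk w → o of length n+1
        cases p with
        | nil => simp at hplen
        | cons hadj q =>
          rename_i c
          have hq : q.length = n := by simpa [Walk.length_cons] using hplen
          have hdc : Γ.dist o c ≤ n := by
            rw [SimpleGraph.dist_comm]
            exact hq ▸ SimpleGraph.dist_le q
          refine Or.inr ?_
          exact Set.mem_biUnion hdc (Γ.adj_symm hadj)
    exact ((ih.union (ih.biUnion (fun u _ => hlf u)))).subset hsub

/-- a geodesic-segment reach: if `v` is farther from `a` than `b` is, then `a` reaches `b`
avoiding `v`. -/
lemma reachOut_of_close {v a b : V} (h : Γ.dist a b < Γ.dist a v) : ReachOut Γ {v} a b := by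
  obtain ⟨p, hp⟩ := hc.exists_walk_length_eq_dist a b
  refine ⟨p, ?_⟩
  intro u hu
  simp only [Set.mem_singleton_iff]
  rintro rfl
  have := dist_support_le p hu
  omega

end Aux
end Aux
section Aux2
open Paper SimpleGraph

variable {V : Type*} {Γ : SimpleGraph V}

namespace Aux

lemma walk_head_step {A : Set V} {v w : V} (hne : w ≠ v) (W : Γ.Walk v w)
    (hW : ∀ t ∈ W.support, t ∉ A) :
    ∃ u, Γ.Adj v u ∧ u ∉ A ∧ u ≠ v ∧ ReachOut Γ (insert v A) u w := by
  classical
  have hvrev : v ∈ W.reverse.support := by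
    rw [Walk.support_reverse, List.mem_reverse]; exact W.start_mem_support
  have hQsup : ((W.reverse.takeUntil v hvrev).reverse).support ⊆ W.support := by
    intro t ht
    rw [Walk.support_reverse, List.mem_reverse] at ht
    have := Walk.support_takeUntil_subset _ hvrev ht
    rw [Walk.support_reverse, List.mem_reverse] at this
    exact this
  have hQcount : ((W.reverse.takeUntil v hvrev).reverse).support.count v = 1 := by
    rw [Walk.support_reverse, List.count_reverse]
    exact Walk.count_support_takeUntil_eq_one _ hvrev
  set Q : Γ.Walk v w := (W.reverse.takeUntil v hvrev).reverse with hQdef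
  clear_value Q
  obtain ⟨u, hadj, Q', rfl⟩ := Walk.exists_eq_cons_of_ne (Ne.symm hne) Q
  have hvQ' : v ∉ Q'.support := by
    have : (Walk.cons hadj Q').support.count v = 1 := hQcount
    rw [Walk.support_cons, List.count_cons_self] at this
    have h0 : Q'.support.count v = 0 := by omega
    exact List.count_eq_zero.1 h0
  have hQ'sub : Q'.support ⊆ W.support := fun t ht =>
    hQsup (by rw [Walk.support_cons]; exact List.mem_cons_of_mem _ ht)
  refine ⟨u, hadj, ?_, ?_, ⟨Q', ?_⟩⟩
  · exact hW u (hQ'sub Q'.start_mem_support)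
  · intro h; exact hvQ' (h ▸ Q'.start_mem_support)
  · intro t ht
    rw [Set.mem_insert_iff]
    push_neg
    exact ⟨fun h => hvQ' (h ▸ ht), hW t (hQ'sub ht)⟩

lemma ray_step (hlf : LocFin Γ) {z v : V} (S : Set V) (hvz : v ≠ z) (hvS : v ∉ S)
    (hinf : (Cpt Γ (insert z S) v).Infinite) :
    ∃ u, Γ.Adj v u ∧ u ∉ S ∧ u ≠ v ∧ u ≠ z ∧
      (Cpt Γ (insert z (insert v S)) u).Infinite := by
  classical
  set A : Set V := insert z S with hA
  have hzA : z ∈ A := Set.mem_insert _ _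
  have hvA : v ∉ A := by
    rw [hA, Set.mem_insert_iff]; push_neg; exact ⟨hvz, hvS⟩
  have hA' : (insert z (insert v S)) = insert v A := by
    rw [hA, Set.insert_comm]
  rw [hA']
  by_contra hno
  push_neg at hno
  -- every element of Cpt Γ A v other than v lies in the Cpt of a good neighbour
  have hcov : Cpt Γ A v ⊆ insert v (⋃ u ∈ {u | Γ.Adj v u ∧ u ∉ A ∧ u ≠ v}, Cpt Γ (insert v A) u) := by
    intro w hw
    rcases eq_or_ne w v with rfl | hne
    · exact Set.mem_insert _ _
    · obtain ⟨W, hW⟩ := hw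
      obtain ⟨u, hadj, huA, huv, hru⟩ := walk_head_step hne W hW
      exact Set.mem_insert_of_mem _ (Set.mem_biUnion ⟨hadj, huA, huv⟩ hru)
  have hfin : (insert v (⋃ u ∈ {u | Γ.Adj v u ∧ u ∉ A ∧ u ≠ v}, Cpt Γ (insert v A) u)).Finite := by
    refine Set.Finite.insert _ ?_
    refine Set.Finite.biUnion ?_ ?_
    · exact (hlf v).subset (fun u hu => hu.1)
    · intro u hu
      rw [← Set.not_infinite]
      intro hinf'
      have huS : u ∉ S := fun h => hu.2.1 (Set.mem_insert_of_mem _ h)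
      have huz : u ≠ z := fun h => hu.2.1 (h ▸ hzA)
      exact hinf' (hno u hu.1 huS hu.2.2 huz)
  exact (hinf.mono hcov) hfin

end Aux
end Aux2
section Aux3
open Paper SimpleGraph

variable {V : Type*} {Γ : SimpleGraph V}

namespace Aux

structure RaySt (Γ : SimpleGraph V) (z x : V) where
  v : V
  S : Set V
  hfin : S.Finite
  hvS : v ∉ S
  hvz : v ≠ z
  hzS : z ∉ S
  hreach : ReachOut Γ {z} x v
  hSr : ∀ s ∈ S, ReachOut Γ {z} x s
  hinf : (Cpt Γ (insert z S) v).Infinite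

noncomputable def rayNext (hlf : LocFin Γ) {z x : V} (st : RaySt Γ z x) : RaySt Γ z x :=
  { v := Classical.choose (ray_step hlf st.S st.hvz st.hvS st.hinf)
    S := insert st.v st.S
    hfin := st.hfin.insert _
    hvS := by
      have h := Classical.choose_spec (ray_step hlf st.S st.hvz st.hvS st.hinf)
      rw [Set.mem_insert_iff]; push_neg
      exact ⟨h.2.2.1, h.2.1⟩
    hvz := (Classical.choose_spec (ray_step hlf st.S st.hvz st.hvS st.hinf)).2.2.2.1
    hzS := by
      rw [Set.mem_insert_iff]; push_neg
      exact ⟨Ne.symm st.hvz, st.hzS⟩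
    hreach := by
      have h := Classical.choose_spec (ray_step hlf st.S st.hvz st.hvS st.hinf)
      refine reachOut_trans st.hreach (reachOut_adj h.1 ?_ ?_)
      · simpa using st.hvz
      · simpa using h.2.2.2.1
    hSr := by
      intro s hs
      rcases Set.mem_insert_iff.1 hs with rfl | hs
      · exact st.hreach
      · exact st.hSr s hs
    hinf := (Classical.choose_spec (ray_step hlf st.S st.hvz st.hvS st.hinf)).2.2.2.2 }

lemma rayNext_adj (hlf : LocFin Γ) {z x : V} (st : RaySt Γ z x) :
    Γ.Adj st.v (rayNext hlf st).v :=
  (Classical.choose_spec (ray_step hlf st.S st.hvz st.hvS st.hinf)).1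

lemma rayNext_S (hlf : LocFin Γ) {z x : V} (st : RaySt Γ z x) :
    (rayNext hlf st).S = insert st.v st.S := rfl

noncomputable def raySeq (hlf : LocFin Γ) {z x : V} (st0 : RaySt Γ z x) : ℕ → RaySt Γ z x
  | 0 => st0
  | n + 1 => rayNext hlf (raySeq hlf st0 n)

lemma raySeq_mem_S (hlf : LocFin Γ) {z x : V} (st0 : RaySt Γ z x) {m n : ℕ} (h : m < n) :
    (raySeq hlf st0 m).v ∈ (raySeq hlf st0 n).S := by
  induction n with
  | zero => omega
  | succ n ih =>
    have hS : (raySeq hlf st0 (n+1)).S = insert (raySeq hlf st0 n).v (raySeq hlf st0 n).S := rfl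
    rw [hS]
    rcases Nat.lt_succ_iff_lt_or_eq.1 h with h | h
    · exact Set.mem_insert_of_mem _ (ih h)
    · rw [h]; exact Set.mem_insert _ _

lemma exists_ray_in_comp (hlf : LocFin Γ) {z x : V} (hxz : x ≠ z)
    (hCinf : (Cpt Γ {z} x).Infinite) :
    ∃ r : ℕ → V, RayIn Γ r ∧ ∀ n, ReachOut Γ {z} x (r n) := by
  have st0 : RaySt Γ z x :=
    { v := x, S := ∅, hfin := Set.finite_empty, hvS := Set.notMem_empty x,
      hvz := hxz, hzS := Set.notMem_empty z,
      hreach := reachOut_refl (by simpa using hxz),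
      hSr := fun s hs => absurd hs (Set.notMem_empty s),
      hinf := by simpa using hCinf }
  refine ⟨fun n => (raySeq hlf st0 n).v, ⟨?_, ?_⟩, ?_⟩
  · -- injectivity
    have key : ∀ m n, m < n → (raySeq hlf st0 m).v ≠ (raySeq hlf st0 n).v := by
      intro m n h heq
      exact (raySeq hlf st0 n).hvS (heq ▸ raySeq_mem_S hlf st0 h)
    intro m n heq
    by_contra hne
    rcases Nat.lt_or_ge m n with h | h
    · exact key m n h heq
    · exact key n m (lt_of_le_of_ne h (Ne.symm hne)) heq.symm
  · intro n
    exact rayNext_adj hlf (raySeq hlf st0 n)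
  · intro n
    exact (raySeq hlf st0 n).hreach

end Aux
end Aux3
section Aux4
open Paper SimpleGraph

variable {V : Type*} {Γ : SimpleGraph V}

namespace Aux

/-- Under `vs ≥ 2`, deleting one vertex leaves at most one infinite component. -/
lemma one_infinite_comp (hlf : LocFin Γ) (hvs : VsGe Γ 2) {z x y : V}
    (hx : x ≠ z) (hy : y ≠ z)
    (hxi : (Cpt Γ {z} x).Infinite) (hyi : (Cpt Γ {z} y).Infinite) :
    ReachOut Γ {z} x y := by
  by_contra hne
  obtain ⟨r₁, hr₁, h₁⟩ := exists_ray_in_comp hlf hx hxi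
  obtain ⟨r₂, hr₂, h₂⟩ := exists_ray_in_comp hlf hy hyi
  have hsep : SepComps Γ {z} r₁ r₂ := by
    refine ⟨0, ?_, ?_, ?_⟩
    · intro m n _ _; exact reachOut_trans (reachOut_symm (h₁ m)) (h₁ n)
    · intro m n _ _; exact reachOut_trans (reachOut_symm (h₂ m)) (h₂ n)
    · intro m n _ _ h
      exact hne (reachOut_trans (h₁ m) (reachOut_trans h (reachOut_symm (h₂ n))))
  have := hvs r₁ r₂ hr₁ hr₂ {z} (Set.finite_singleton z) hsep
  rw [Set.ncard_singleton] at this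
  omega

end Aux
end Aux4
section Aux5
open Paper SimpleGraph

variable {V G₀ : Type*} [Group G₀] {Γ : SimpleGraph V}
variable {l B : ℝ} {φ : G₀ → V → V}

namespace Aux

lemma qa_up (hl : 1 ≤ l) (hqa : IsQAct Γ l φ) (g : G₀) (x y : V) :
    Γ.dist (φ g x) (φ g y) ≤ ⌈l⌉₊ * Γ.dist x y + ⌈l⌉₊ := by
  have h := ((hqa.1 g).1 x y).2
  have hL : l ≤ (⌈l⌉₊ : ℝ) := Nat.le_ceil l
  have hd : (0 : ℝ) ≤ (Γ.dist x y : ℝ) := Nat.cast_nonneg _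
  have : (Γ.dist (φ g x) (φ g y) : ℝ) ≤ (⌈l⌉₊ : ℝ) * Γ.dist x y + ⌈l⌉₊ :=
    le_trans h (by nlinarith)
  exact_mod_cast this

lemma qa_low (hl : 1 ≤ l) (hqa : IsQAct Γ l φ) (g : G₀) (x y : V) :
    Γ.dist x y ≤ ⌈l⌉₊ * Γ.dist (φ g x) (φ g y) + ⌈l⌉₊ * ⌈l⌉₊ := by
  have h := ((hqa.1 g).1 x y).1
  have hL : l ≤ (⌈l⌉₊ : ℝ) := Nat.le_ceil l
  have hl0 : (0:ℝ) < l := lt_of_lt_of_le one_pos hl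
  have hd : (0 : ℝ) ≤ (Γ.dist (φ g x) (φ g y) : ℝ) := Nat.cast_nonneg _
  have h1 : (Γ.dist x y : ℝ) ≤ l * Γ.dist (φ g x) (φ g y) + l * l := by
    have := sub_le_iff_le_add.1 h
    rw [div_le_iff₀ hl0] at this
    nlinarith
  have : (Γ.dist x y : ℝ) ≤ (⌈l⌉₊ : ℝ) * Γ.dist (φ g x) (φ g y) + ⌈l⌉₊ * ⌈l⌉₊ :=
    le_trans h1 (by nlinarith)
  exact_mod_cast this

lemma qa_inv1 (hl : 1 ≤ l) (hqa : IsQAct Γ l φ) (g : G₀) (x : V) :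
    Γ.dist (φ g⁻¹ (φ g x)) x ≤ ⌈l⌉₊ := by
  have h := (hqa.2.2 g).1 x
  have hL : l ≤ (⌈l⌉₊ : ℝ) := Nat.le_ceil l
  exact_mod_cast le_trans h hL

lemma qa_inv2 (hl : 1 ≤ l) (hqa : IsQAct Γ l φ) (g : G₀) (x : V) :
    Γ.dist (φ g (φ g⁻¹ x)) x ≤ ⌈l⌉₊ := by
  have h := (hqa.2.2 g).2 x
  have hL : l ≤ (⌈l⌉₊ : ℝ) := Nat.le_ceil l
  exact_mod_cast le_trans h hL

lemma qa_cob (hcb : Cobdd Γ B φ) (x y : V) : ∃ g : G₀, Γ.dist x (φ g y) ≤ ⌈B⌉₊ := by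
  obtain ⟨g, hg⟩ := hcb x y
  exact ⟨g, by exact_mod_cast le_trans hg (Nat.le_ceil B)⟩

end Aux
end Aux5
section Aux6
open Paper SimpleGraph

variable {V G₀ : Type*} [Group G₀] {Γ : SimpleGraph V}
variable {l B : ℝ} {φ : G₀ → V → V}

namespace Aux

lemma exists_attach (hc : Γ.Connected) {Bo : Set V} :
    ∀ {w o' : V} (_ : Γ.Walk w o'), o' ∈ Bo → w ∉ Bo →
      ∃ a, (a ∉ Bo ∧ ∃ u ∈ Bo, Γ.Adj u a) ∧ ReachOut Γ Bo w a := by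
  intro w o' W
  induction W with
  | nil => intro h1 h2; exact absurd h1 h2
  | cons h W' ih =>
    rename_i w c o'
    intro ho' hw
    by_cases hcB : c ∈ Bo
    · exact ⟨w, ⟨hw, c, hcB, h.symm⟩, reachOut_refl hw⟩
    · obtain ⟨a, ha, hra⟩ := ih ho' hcB
      exact ⟨a, ha, reachOut_trans (reachOut_adj h hw hcB) hra⟩

lemma bdd_of_finite {s : Set V} (hs : s.Finite) (f : V → ℕ) : ∃ D, ∀ y ∈ s, f y ≤ D := by
  obtain ⟨D, hD⟩ := (hs.image f).bddAbove
  exact ⟨D, fun y hy => hD (Set.mem_image_of_mem f hy)⟩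

lemma adj_dist_le_one {x y : V} (h : Γ.Adj x y) : Γ.dist x y ≤ 1 := by
  have := SimpleGraph.dist_le (Walk.cons h Walk.nil)
  simpa using this

/-- The key uniform bound: pockets have uniformly bounded depth. -/
lemma depth_bound (hc : Γ.Connected) (hlf : LocFin Γ)
    (hl : 1 ≤ l) (hqa : IsQAct Γ l φ) (hcb : Cobdd Γ B φ) :
    ∃ R₀ : ℕ, ∀ v x : V, Pck Γ v x → Γ.dist v x ≤ R₀ := by
  classical
  set L : ℕ := ⌈l⌉₊ with hLdef
  set Bn : ℕ := ⌈B⌉₊ with hBndef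
  have hL1 : 1 ≤ L := by
    have h1 : (1 : ℝ) ≤ (L : ℝ) := le_trans hl (Nat.le_ceil l)
    exact_mod_cast h1
  obtain ⟨o⟩ := hc.nonempty
  by_contra hno
  push_neg at hno
  set s' : ℕ := Bn + 2*L*L + 2*L with hs'def
  set Bo : Set V := ballS Γ o s' with hBodef
  have hBo : Bo.Finite := ball_finite hc hlf o s'
  have hoBo : o ∈ Bo := by
    show Γ.dist o o ≤ s'
    simp [SimpleGraph.dist_self]
  set Z : Set V := {z' : V | z' ∉ Bo ∧ (Cpt Γ Bo z').Finite} with hZdef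
  have hZfin : Z.Finite := by
    have hAfin : {a : V | a ∉ Bo ∧ ∃ u ∈ Bo, Γ.Adj u a}.Finite := by
      refine (hBo.biUnion (fun u _ => hlf u)).subset ?_
      rintro a ⟨haB, u, huB, hadj⟩
      exact Set.mem_biUnion huB hadj
    have hsub : Z ⊆ ⋃ a ∈ {a : V | (a ∉ Bo ∧ ∃ u ∈ Bo, Γ.Adj u a) ∧ (Cpt Γ Bo a).Finite},
        Cpt Γ Bo a := by
      rintro z' ⟨hz'B, hz'fin⟩
      obtain ⟨W⟩ := hc.preconnected z' o
      obtain ⟨a, ha, hra⟩ := exists_attach hc W hoBo hz'B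
      have hcpteq : Cpt Γ Bo z' = Cpt Γ Bo a := cmp_eq_of_reachOut hra
      exact Set.mem_biUnion (⟨ha, hcpteq ▸ hz'fin⟩ :
        a ∈ {a : V | (a ∉ Bo ∧ ∃ u ∈ Bo, Γ.Adj u a) ∧ (Cpt Γ Bo a).Finite})
        (reachOut_symm hra)
    refine (Set.Finite.biUnion ?_ ?_).subset hsub
    · exact hAfin.subset (fun a ha => ha.1)
    · intro a ha; exact ha.2
  obtain ⟨Rs, hRs⟩ := bdd_of_finite hZfin (Γ.dist o)
  -- pick a very deep pocket
  set M : ℕ := max s' Rs with hMdef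
  obtain ⟨v, x, ⟨hxv, hCfin⟩, hdeep⟩ := hno (L*(Bn + L + M + 2) + 2*L + 2)
  -- move it near o
  obtain ⟨g, hg⟩ := qa_cob hcb o v
  -- (n1): the moved pocket point is far from o
  have hdvx : L*(Bn + L + M + 2) + 2*L + 2 < Γ.dist v x := hdeep
  have hlow : Γ.dist v x ≤ L * Γ.dist (φ g v) (φ g x) + L * L := qa_low hl hqa g v x
  have htri : Γ.dist (φ g v) (φ g x) ≤ Bn + Γ.dist o (φ g x) := by
    have h1 := hc.dist_triangle (u := φ g v) (v := o) (w := φ g x)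
    have h2 : Γ.dist (φ g v) o ≤ Bn := by rw [SimpleGraph.dist_comm]; exact hg
    omega
  have hn1 : M < Γ.dist o (φ g x) := by
    have h3 : Γ.dist v x ≤ L * (Bn + Γ.dist o (φ g x)) + L * L :=
      le_trans hlow (Nat.add_le_add_right (Nat.mul_le_mul_left L htri) _)
    have e1 : L*(Bn + L + M + 2) = L*Bn + L*L + L*M + 2*L := by ring
    have e2 : L*(Bn + Γ.dist o (φ g x)) = L*Bn + L*(Γ.dist o (φ g x)) := by ring
    have h4 : L*M < L*(Γ.dist o (φ g x)) := by linarith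
    exact lt_of_mul_lt_mul_left h4 (Nat.zero_le L)
  have hz'Bo : φ g x ∉ Bo := by
    intro h
    have h1 : Γ.dist o (φ g x) ≤ s' := h
    have h2 : s' ≤ M := le_max_left _ _
    omega
  -- key: far points pull back far from v
  have hkey : ∀ w : V, s' < Γ.dist o w → 2*L < Γ.dist v (φ g⁻¹ w) := by
    intro w hw
    by_contra hle
    push_neg at hle
    have h1 : Γ.dist (φ g v) (φ g (φ g⁻¹ w)) ≤ L * Γ.dist v (φ g⁻¹ w) + L :=
      qa_up hl hqa g _ _
    have h2 : Γ.dist (φ g (φ g⁻¹ w)) w ≤ L := qa_inv2 hl hqa g w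
    have h3 : Γ.dist o (φ g v) ≤ Bn := hg
    have t1 := hc.dist_triangle (u := o) (v := φ g (φ g⁻¹ w)) (w := w)
    have t2 := hc.dist_triangle (u := o) (v := φ g v) (w := φ g (φ g⁻¹ w))
    have h5 : L * Γ.dist v (φ g⁻¹ w) ≤ L * (2*L) := Nat.mul_le_mul_left L hle
    have e1 : L*(2*L) = 2*L*L := by ring
    have hfin : Γ.dist o w ≤ s' := by rw [hs'def]; linarith
    omega
  -- the start of the chain
  have hstart : ReachOut Γ {v} x (φ g⁻¹ (φ g x)) := by
    apply reachOut_of_close hc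
    have h1 : Γ.dist (φ g⁻¹ (φ g x)) x ≤ L := qa_inv1 hl hqa g x
    have h2 : Γ.dist x (φ g⁻¹ (φ g x)) ≤ L := by rwa [SimpleGraph.dist_comm]
    have h3 : L < Γ.dist x v := by rw [SimpleGraph.dist_comm]; nlinarith
    omega
  obtain ⟨D, hD⟩ := bdd_of_finite hCfin (fun f => Γ.dist f x)
  have hcpt : Cpt Γ Bo (φ g x) ⊆ ballS Γ (φ g x) (L*D + 2*L) := by
    rintro w ⟨W, hW⟩
    have hchain : ∀ i, i ≤ W.length → ReachOut Γ {v} x (φ g⁻¹ (W.getVert i)) := by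
      intro i
      induction i with
      | zero => intro _; simpa [Walk.getVert_zero] using hstart
      | succ i ih =>
        intro hi
        have hii : i < W.length := by omega
        have hadj := W.adj_getVert_succ hii
        have hstep : ReachOut Γ {v} (φ g⁻¹ (W.getVert i)) (φ g⁻¹ (W.getVert (i+1))) := by
          apply reachOut_of_close hc
          have hd1 : Γ.dist (W.getVert i) (W.getVert (i+1)) ≤ 1 := adj_dist_le_one hadj
          have hd2 : Γ.dist (φ g⁻¹ (W.getVert i)) (φ g⁻¹ (W.getVert (i+1))) ≤ 2*L :=
            le_trans (qa_up hl hqa g⁻¹ _ _) (by nlinarith)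
          have hmem : W.getVert i ∈ W.support :=
            Walk.mem_support_iff_exists_getVert.mpr ⟨i, rfl, le_of_lt hii⟩
          have hfar : s' < Γ.dist o (W.getVert i) := by
            by_contra hle
            push_neg at hle
            exact hW _ hmem hle
          have hk := hkey _ hfar
          have : 2*L < Γ.dist (φ g⁻¹ (W.getVert i)) v := by rwa [SimpleGraph.dist_comm] at hk
          omega
        exact reachOut_trans (ih (by omega)) hstep
    have hWmem : φ g⁻¹ w ∈ Cpt Γ {v} x := by
      have := hchain W.length le_rfl
      rwa [Walk.getVert_length] at this
    have hDw : Γ.dist (φ g⁻¹ w) x ≤ D := hD _ hWmem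
    show Γ.dist (φ g x) w ≤ L*D + 2*L
    have h1 : Γ.dist (φ g x) (φ g (φ g⁻¹ w)) ≤ L * Γ.dist x (φ g⁻¹ w) + L :=
      qa_up hl hqa g _ _
    have h2 : Γ.dist (φ g (φ g⁻¹ w)) w ≤ L := qa_inv2 hl hqa g w
    have htr := hc.dist_triangle (u := φ g x) (v := φ g (φ g⁻¹ w)) (w := w)
    have h4 : Γ.dist x (φ g⁻¹ w) ≤ D := by rw [SimpleGraph.dist_comm]; exact hDw
    nlinarith
  have hz'Z : φ g x ∈ Z := ⟨hz'Bo, (ball_finite hc hlf (φ g x) _).subset hcpt⟩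
  have hle1 := hRs _ hz'Z
  have hle2 : Rs ≤ M := le_max_right _ _
  omega

end Aux
end Aux6
section Aux7
open Paper SimpleGraph

variable {V : Type*} {Γ : SimpleGraph V}

namespace Aux

lemma no_mutual_pocket (hc : Γ.Connected) (hinfV : Infinite V) {a b : V}
    (h1 : Pck Γ b a) (h2 : Pck Γ a b) : False := by
  have hab : a ≠ b := h1.1
  have step : ∀ {p q : V}, Γ.Adj p q → p ∈ Cpt Γ {b} a ∪ Cpt Γ {a} b →
      q ∈ Cpt Γ {b} a ∪ Cpt Γ {a} b := by
    rintro p q hadj (hp | hp)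
    · by_cases hq : q = b
      · subst hq
        exact Or.inr (reachOut_refl (by simpa using (Ne.symm hab)))
      · refine Or.inl (reachOut_trans hp (reachOut_adj hadj ?_ (by simpa using hq)))
        exact reachOut_end_not_mem hp
    · by_cases hq : q = a
      · subst hq
        exact Or.inl (reachOut_refl (by simpa using hab))
      · refine Or.inr (reachOut_trans hp (reachOut_adj hadj ?_ (by simpa using hq)))
        exact reachOut_end_not_mem hp
  have walkstep : ∀ {p q : V} (_ : Γ.Walk p q), p ∈ Cpt Γ {b} a ∪ Cpt Γ {a} b →
      q ∈ Cpt Γ {b} a ∪ Cpt Γ {a} b := by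
    intro p q W
    induction W with
    | nil => exact id
    | cons hadj W' ih => intro hp; exact ih (step hadj hp)
  have hcov : ∀ z : V, z ∈ Cpt Γ {b} a ∪ Cpt Γ {a} b := by
    intro z
    obtain ⟨W⟩ := hc.preconnected a z
    exact walkstep W (Or.inl (reachOut_refl (by simpa using hab)))
  have huniv : (Set.univ : Set V).Finite :=
    (h1.2.union h2.2).subset (fun z _ => hcov z)
  exact Set.infinite_univ huniv

lemma pck_trans (hc : Γ.Connected) (hinfV : Infinite V) {a b c : V}
    (h1 : Pck Γ b a) (h2 : Pck Γ c b) : Pck Γ c a := by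
  classical
  constructor
  · rintro rfl
    exact no_mutual_pocket hc hinfV h1 h2
  · refine (h1.2.union h2.2).subset ?_
    rintro w ⟨W, hW⟩
    by_cases hb : b ∈ W.support
    · exact Or.inr ⟨W.dropUntil b hb, fun t ht => hW t (Walk.support_dropUntil_subset _ _ ht)⟩
    · refine Or.inl ⟨W, ?_⟩
      intro t ht
      simp only [Set.mem_singleton_iff]
      rintro rfl
      exact hb ht

lemma exists_rel_max {α : Type*} (r : α → α → Prop) (htr : ∀ {p q t}, r p q → r q t → r p t)
    (hirr : ∀ p, ¬ r p p) {s : Set α} (hfin : s.Finite) (hne : s.Nonempty) :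
    ∃ m ∈ s, ∀ b ∈ s, ¬ r m b := by
  classical
  have key : ∀ F : Finset α, F.Nonempty → ∃ m ∈ F, ∀ b ∈ F, ¬ r m b := by
    intro F
    induction F using Finset.induction_on with
    | empty => rintro ⟨m, hm⟩; exact absurd hm (Finset.notMem_empty m)
    | insert a F ha ih =>
      intro _
      by_cases hFne : F.Nonempty
      · obtain ⟨m, hm, hmax⟩ := ih hFne
        by_cases hma : r m a
        · refine ⟨a, Finset.mem_insert_self _ _, ?_⟩
          intro b hb hrab
          rcases Finset.mem_insert.1 hb with rfl | hb
          · exact hirr b hrab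
          · exact hmax b hb (htr hma hrab)
        · refine ⟨m, Finset.mem_insert_of_mem hm, ?_⟩
          intro b hb hrmb
          rcases Finset.mem_insert.1 hb with rfl | hb
          · exact hma hrmb
          · exact hmax b hb hrmb
      · rw [Finset.not_nonempty_iff_eq_empty] at hFne
        subst hFne
        refine ⟨a, Finset.mem_insert_self _ _, ?_⟩
        intro b hb hrab
        rcases Finset.mem_insert.1 hb with rfl | hb
        · exact hirr b hrab
        · exact absurd hb (Finset.notMem_empty b)
  obtain ⟨m, hm, hmax⟩ := key hfin.toFinset (by simpa [Set.Finite.toFinset] using hne)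
  refine ⟨m, by simpa using hm, fun b hb => hmax b (by simpa using hb)⟩

lemma pocket_core (hc : Γ.Connected) (hinfV : Infinite V) (hlf : LocFin Γ) {R₀ : ℕ}
    (hR₀ : ∀ v x, Pck Γ v x → Γ.dist v x ≤ R₀) {x : V} (hx : x ∉ CoreS Γ) :
    ∃ v, v ∈ CoreS Γ ∧ Pck Γ v x := by
  have hSne : {v | Pck Γ v x}.Nonempty := by
    by_contra h
    rw [Set.not_nonempty_iff_eq_empty] at h
    refine hx (fun v hv => ?_)
    have : v ∈ {v | Pck Γ v x} := hv
    rw [h] at this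
    exact this
  have hSfin : {v | Pck Γ v x}.Finite := by
    refine (ball_finite hc hlf x R₀).subset ?_
    intro v hv
    show Γ.dist x v ≤ R₀
    rw [SimpleGraph.dist_comm]
    exact hR₀ v x hv
  obtain ⟨m, hm, hmax⟩ := exists_rel_max (fun p q => Pck Γ q p)
    (fun h1 h2 => pck_trans hc hinfV h1 h2) (fun p hp => hp.1 rfl) hSfin hSne
  refine ⟨m, ?_, hm⟩
  intro w hw
  exact hmax w (pck_trans hc hinfV hm hw) hw

lemma core_dense (hc : Γ.Connected) (hinfV : Infinite V) (hlf : LocFin Γ) {R₀ : ℕ}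
    (hR₀ : ∀ v x, Pck Γ v x → Γ.dist v x ≤ R₀) (x : V) :
    ∃ v ∈ CoreS Γ, Γ.dist x v ≤ R₀ := by
  by_cases hx : x ∈ CoreS Γ
  · exact ⟨x, hx, by simp [SimpleGraph.dist_self]⟩
  · obtain ⟨v, hv, hpck⟩ := pocket_core hc hinfV hlf hR₀ hx
    exact ⟨v, hv, by rw [SimpleGraph.dist_comm]; exact hR₀ v x hpck⟩

lemma core_infinite (hc : Γ.Connected) (hinfV : Infinite V) (hlf : LocFin Γ) {R₀ : ℕ}
    (hR₀ : ∀ v x, Pck Γ v x → Γ.dist v x ≤ R₀) : (CoreS Γ).Infinite := by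
  intro hfin
  have hcov : (Set.univ : Set V) ⊆ ⋃ v ∈ CoreS Γ, ballS Γ v R₀ := by
    intro x _
    obtain ⟨v, hv, hd⟩ := core_dense hc hinfV hlf hR₀ x
    refine Set.mem_biUnion hv ?_
    show Γ.dist v x ≤ R₀
    rwa [SimpleGraph.dist_comm]
  exact Set.infinite_univ ((hfin.biUnion (fun v _ => ball_finite hc hlf v R₀)).subset hcov)

end Aux
end Aux7
section Aux8
open Paper SimpleGraph

variable {V : Type*} {Γ : SimpleGraph V}

namespace Aux

lemma endpoint_pck {x y u : V} (P : Γ.Walk x y) (hp : P.IsPath) (hu : u ∈ P.support)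
    (hPck : Pck Γ x u) (hne : y ≠ x) : Pck Γ x y := by
  classical
  have hux : u ≠ x := hPck.1
  have hxdp : x ∉ (P.dropUntil u hu).support := by
    intro hx
    have hsplit := P.take_spec hu
    have hnodup : P.support.Nodup := hp.support_nodup
    rw [← hsplit, Walk.support_append] at hnodup
    have hdisj := List.disjoint_of_nodup_append hnodup
    have hxtk : x ∈ (P.takeUntil u hu).support := Walk.start_mem_support _
    have hxtail : x ∈ (P.dropUntil u hu).support.tail := by
      have := Walk.support_eq_cons (P.dropUntil u hu)
      rw [this] at hx
      rcases List.mem_cons.1 hx with rfl | h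
      · exact absurd rfl hux
      · exact h
    exact hdisj hxtk hxtail
  have hro : ReachOut Γ ({x} : Set V) u y := by
    refine ⟨P.dropUntil u hu, ?_⟩
    intro t ht
    simp only [Set.mem_singleton_iff]
    rintro rfl
    exact hxdp ht
  refine ⟨hne, ?_⟩
  rw [← cmp_eq_of_reachOut hro]
  exact hPck.2

lemma find_core_vertex (hc : Γ.Connected) (hinfV : Infinite V) (hlf : LocFin Γ) {R₀ : ℕ}
    (hR₀ : ∀ v x, Pck Γ v x → Γ.dist v x ≤ R₀) {x y : V} (P : Γ.Walk x y) (hp : P.IsPath)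
    (hx : x ∈ CoreS Γ) (hy : y ∈ CoreS Γ) (hxy : x ≠ y)
    {u : V} (hu : u ∈ P.support) (hunc : u ∉ CoreS Γ) :
    ∃ v, v ∈ CoreS Γ ∧ v ∈ P.support ∧ v ≠ x ∧ v ≠ y := by
  classical
  obtain ⟨v, hvcore, hpck⟩ := pocket_core hc hinfV hlf hR₀ hunc
  have hvsup : v ∈ P.support := by
    by_contra hv
    have hro : ReachOut Γ ({v} : Set V) x u := by
      refine ⟨P.takeUntil u hu, ?_⟩
      intro t ht
      simp only [Set.mem_singleton_iff]
      rintro rfl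
      exact hv (Walk.support_takeUntil_subset _ _ ht)
    have hfin : (Cpt Γ {v} x).Finite := by
      rw [cmp_eq_of_reachOut hro]
      exact hpck.2
    have hxv : x ≠ v := fun h => hv (h ▸ P.start_mem_support)
    exact hx v ⟨hxv, hfin⟩
  have hvx : v ≠ x := by
    rintro rfl
    exact hy v (endpoint_pck P hp hu hpck (Ne.symm hxy))
  have hvy : v ≠ y := by
    rintro rfl
    have hurev : u ∈ P.reverse.support := by
      rw [Walk.support_reverse, List.mem_reverse]; exact hu
    exact hx v (endpoint_pck P.reverse hp.reverse hurev hpck hxy)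
  exact ⟨v, hvcore, hvsup, hvx, hvy⟩

lemma prune (hc : Γ.Connected) (hinfV : Infinite V) (hlf : LocFin Γ) {R₀ : ℕ}
    (hR₀ : ∀ v x, Pck Γ v x → Γ.dist v x ≤ R₀) (n : ℕ) :
    ∀ {x y : V} (W : Γ.Walk x y), W.length ≤ n → x ∈ CoreS Γ → y ∈ CoreS Γ →
      ∃ W' : Γ.Walk x y, W'.length ≤ W.length ∧ (∀ u ∈ W'.support, u ∈ CoreS Γ) ∧
        (∀ u ∈ W'.support, u ∈ W.support) := by
  classical
  induction n using Nat.strong_induction_on with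
  | _ n ih =>
  intro x y W hlen hx hy
  by_cases hxy : x = y
  · subst hxy
    refine ⟨Walk.nil, by simp, ?_, ?_⟩
    · intro u hu
      simp only [Walk.support_nil, List.mem_singleton] at hu
      subst hu; exact hx
    · intro u hu
      simp only [Walk.support_nil, List.mem_singleton] at hu
      subst hu; exact W.start_mem_support
  by_cases hall : ∀ u ∈ W.bypass.support, u ∈ CoreS Γ
  · exact ⟨W.bypass, W.length_bypass_le, hall, fun u hu => W.support_bypass_subset hu⟩
  push_neg at hall
  obtain ⟨u, hu, hunc⟩ := hall
  obtain ⟨v, hvc, hvs, hvx, hvy⟩ :=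
    find_core_vertex hc hinfV hlf hR₀ W.bypass W.bypass_isPath hx hy hxy hu hunc
  have hsplit := W.bypass.take_spec hvs
  have hlen2 : (W.bypass.takeUntil v hvs).length + (W.bypass.dropUntil v hvs).length
      = W.bypass.length := by
    rw [← Walk.length_append, hsplit]
  have htklen : 1 ≤ (W.bypass.takeUntil v hvs).length := by
    by_contra h
    push_neg at h
    exact hvx (Walk.eq_of_length_eq_zero (Nat.lt_one_iff.1 h)).symm
  have hdplen : 1 ≤ (W.bypass.dropUntil v hvs).length := by
    by_contra h
    push_neg at h
    exact hvy (Walk.eq_of_length_eq_zero (Nat.lt_one_iff.1 h))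
  have hPlen : W.bypass.length ≤ W.length := W.length_bypass_le
  obtain ⟨W₁, hW₁len, hW₁core, hW₁sub⟩ :=
    ih (W.bypass.takeUntil v hvs).length (by omega) (W.bypass.takeUntil v hvs) le_rfl hx hvc
  obtain ⟨W₂, hW₂len, hW₂core, hW₂sub⟩ :=
    ih (W.bypass.dropUntil v hvs).length (by omega) (W.bypass.dropUntil v hvs) le_rfl hvc hy
  refine ⟨W₁.append W₂, ?_, ?_, ?_⟩
  · rw [Walk.length_append]; omega
  · intro t ht
    rcases (Walk.mem_support_append_iff _ _).1 ht with ht | ht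
    · exact hW₁core t ht
    · exact hW₂core t ht
  · intro t ht
    rcases (Walk.mem_support_append_iff _ _).1 ht with ht | ht
    · exact W.support_bypass_subset (Walk.support_takeUntil_subset _ _ (hW₁sub t ht))
    · exact W.support_bypass_subset (Walk.support_dropUntil_subset _ _ (hW₂sub t ht))

end Aux
end Aux8
section Aux9
open Paper SimpleGraph

variable {V : Type*} (Γ : SimpleGraph V)

/-- The candidate subgraph: induced on the core. -/
def coreSub : Γ.Subgraph where
  verts := CoreS Γ
  Adj a b := Γ.Adj a b ∧ a ∈ CoreS Γ ∧ b ∈ CoreS Γ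
  adj_sub h := h.1
  edge_vert h := h.2.1
  symm := ⟨fun a b h => ⟨h.1.symm, h.2.2, h.2.1⟩⟩

namespace Aux

variable {Γ}

lemma lift_walk : ∀ {x y : V} (W : Γ.Walk x y) (hx : x ∈ CoreS Γ) (hy : y ∈ CoreS Γ),
    (∀ u ∈ W.support, u ∈ CoreS Γ) →
    ∃ W' : (coreSub Γ).coe.Walk ⟨x, hx⟩ ⟨y, hy⟩, W'.length = W.length := by
  intro x y W
  induction W with
  | nil => intro hx hy _; exact ⟨Walk.nil, rfl⟩
  | cons h W ih =>
    rename_i x c y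
    intro hx hy hsup
    have hcc : c ∈ CoreS Γ := hsup c (by rw [Walk.support_cons]; exact List.mem_cons_of_mem _ W.start_mem_support)
    obtain ⟨W', hlen⟩ := ih hcc hy (fun u hu => hsup u (by rw [Walk.support_cons]; exact List.mem_cons_of_mem _ hu))
    have hadj : (coreSub Γ).coe.Adj ⟨x, hx⟩ ⟨c, hcc⟩ := ⟨h, hx, hcc⟩
    exact ⟨Walk.cons hadj W', by simp [Walk.length_cons, hlen]⟩

lemma lift_walk2 (v₀ : ↥(CoreS Γ)) :
    ∀ {x y : V} (W : Γ.Walk x y) (hx : x ∈ CoreS Γ) (hy : y ∈ CoreS Γ)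
    (hxv : x ≠ v₀.1) (hyv : y ≠ v₀.1),
    (∀ u ∈ W.support, u ∈ CoreS Γ ∧ u ≠ v₀.1) →
    ((coreSub Γ).coe.induce {w : ↥(CoreS Γ) | w ≠ v₀}).Reachable
      ⟨⟨x, hx⟩, fun h => hxv (congrArg Subtype.val h)⟩
      ⟨⟨y, hy⟩, fun h => hyv (congrArg Subtype.val h)⟩ := by
  intro x y W
  induction W with
  | nil => intro hx hy hxv hyv _; rfl
  | cons h W ih =>
    rename_i x c y
    intro hx hy hxv hyv hsup
    have hcc := hsup c (by rw [Walk.support_cons]; exact List.mem_cons_of_mem _ W.start_mem_support)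
    have hrest := ih hcc.1 hy hcc.2 hyv (fun u hu => hsup u (by rw [Walk.support_cons]; exact List.mem_cons_of_mem _ hu))
    refine Reachable.trans (Adj.reachable ?_) hrest
    show (coreSub Γ).coe.Adj ⟨x, hx⟩ ⟨c, hcc.1⟩
    exact ⟨h, hx, hcc.1⟩

lemma proj_walk {L : Γ.Subgraph} {a b : ↥L.verts} (W : L.coe.Walk a b) :
    ∃ W' : Γ.Walk a.1 b.1, W'.length = W.length ∧
      ∀ u ∈ W'.support, ∃ hu : u ∈ L.verts, (⟨u, hu⟩ : ↥L.verts) ∈ W.support := by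
  refine ⟨(W.map L.hom).copy (@id (L.hom a = a.1) rfl) (@id (L.hom b = b.1) rfl), by rw [Walk.length_copy, Walk.length_map], ?_⟩
  intro u hu
  rw [Walk.support_copy, Walk.support_map, List.mem_map] at hu
  obtain ⟨s, hs, rfl⟩ := hu
  exact ⟨s.2, hs⟩

lemma induce_proj_walk {W' : Type*} {H : SimpleGraph W'} {s : Set W'} {a b : ↥s}
    (P : (H.induce s).Walk a b) :
    ∃ Q : H.Walk a.1 b.1, ∀ u ∈ Q.support, ∃ hu : u ∈ s, (⟨u, hu⟩ : ↥s) ∈ P.support := by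
  induction P with
  | nil =>
    rename_i a
    refine ⟨Walk.nil, ?_⟩
    intro u hu
    simp only [Walk.support_nil, List.mem_singleton] at hu
    subst hu
    exact ⟨a.2, by simp⟩
  | cons h P ih =>
    rename_i a c b
    obtain ⟨Q, hQ⟩ := ih
    refine ⟨Walk.cons (SimpleGraph.induce_adj.mp h) Q, ?_⟩
    intro u hu
    rw [Walk.support_cons] at hu
    rcases List.mem_cons.1 hu with rfl | hu
    · exact ⟨a.2, by rw [Walk.support_cons]; simp⟩
    · obtain ⟨h1, h2⟩ := hQ u hu
      exact ⟨h1, by rw [Walk.support_cons]; exact List.mem_cons_of_mem _ h2⟩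

end Aux
end Aux9
section Aux10
open Paper SimpleGraph

variable {V : Type*} {Γ : SimpleGraph V}

namespace Aux

variable (hc : Γ.Connected) (hinfV : Infinite V) (hlf : LocFin Γ)
variable {R₀ : ℕ} (hR₀ : ∀ v x, Pck Γ v x → Γ.dist v x ≤ R₀)

include hc hinfV hlf hR₀

lemma core_reachable (x y : ↥(CoreS Γ)) : (coreSub Γ).coe.Reachable x y := by
  obtain ⟨W⟩ := hc.preconnected x.1 y.1
  obtain ⟨W', _, hWc, _⟩ := prune hc hinfV hlf hR₀ W.length W le_rfl x.2 y.2
  obtain ⟨W'', _⟩ := lift_walk W' x.2 y.2 hWc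
  exact ⟨W''⟩

lemma core_connected : (coreSub Γ).coe.Connected := by
  have hne : (CoreS Γ).Nonempty := (core_infinite hc hinfV hlf hR₀).nonempty
  rw [connected_iff]
  refine ⟨fun x y => core_reachable hc hinfV hlf hR₀ x y, ?_⟩
  obtain ⟨o, ho⟩ := hne
  exact ⟨⟨o, ho⟩⟩

lemma core_dist_eq (x y : ↥(CoreS Γ)) : (coreSub Γ).coe.dist x y = Γ.dist x.1 y.1 := by
  apply le_antisymm
  · obtain ⟨W, hW⟩ := hc.exists_walk_length_eq_dist x.1 y.1
    obtain ⟨W', hlen, hWc, _⟩ := prune hc hinfV hlf hR₀ W.length W le_rfl x.2 y.2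
    obtain ⟨W'', hlen2⟩ := lift_walk W' x.2 y.2 hWc
    calc (coreSub Γ).coe.dist x y ≤ W''.length := SimpleGraph.dist_le _
    _ = W'.length := hlen2
    _ ≤ W.length := hlen
    _ = Γ.dist x.1 y.1 := hW
  · obtain ⟨P, hP⟩ := (core_reachable hc hinfV hlf hR₀ x y).exists_walk_length_eq_dist
    obtain ⟨P', hlen, _⟩ := proj_walk P
    calc Γ.dist x.1 y.1 ≤ P'.length := SimpleGraph.dist_le _
    _ = P.length := hlen
    _ = (coreSub Γ).coe.dist x y := hP

lemma core_remove (hvs : VsGe Γ 2) (v₀ : ↥(CoreS Γ)) :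
    ((coreSub Γ).coe.induce {w : ↥(CoreS Γ) | w ≠ v₀}).Connected := by
  rw [connected_iff]
  constructor
  · rintro ⟨x, hxne⟩ ⟨y, hyne⟩
    have hxv : x.1 ≠ v₀.1 := fun h => hxne (Subtype.ext h)
    have hyv : y.1 ≠ v₀.1 := fun h => hyne (Subtype.ext h)
    have hxinf : (Cpt Γ {v₀.1} x.1).Infinite := by
      intro hfin
      exact x.2 v₀.1 ⟨hxv, hfin⟩
    have hyinf : (Cpt Γ {v₀.1} y.1).Infinite := by
      intro hfin
      exact y.2 v₀.1 ⟨hyv, hfin⟩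
    obtain ⟨W, hW⟩ := one_infinite_comp hlf hvs hxv hyv hxinf hyinf
    obtain ⟨W', _, hWc, hWsub⟩ := prune hc hinfV hlf hR₀ W.length W le_rfl x.2 y.2
    have := lift_walk2 v₀ W' x.2 y.2 hxv hyv (fun u hu => ⟨hWc u hu, by
      have := hW u (hWsub u hu)
      simpa using this⟩)
    exact this
  · obtain ⟨w, hw⟩ := ((core_infinite hc hinfV hlf hR₀).diff (Set.finite_singleton v₀.1)).nonempty
    exact ⟨⟨⟨w, hw.1⟩, fun h => (by simpa using hw.2 : w ≠ v₀.1) (congrArg Subtype.val h)⟩⟩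

lemma core_three : ∃ a b c : ↥(CoreS Γ), a ≠ b ∧ a ≠ c ∧ b ≠ c := by
  have hCi := core_infinite hc hinfV hlf hR₀
  obtain ⟨a, ha⟩ := hCi.nonempty
  obtain ⟨b, hb⟩ := (hCi.diff (Set.finite_singleton a)).nonempty
  obtain ⟨c, hcc⟩ := (hCi.diff ((Set.finite_singleton a).insert b)).nonempty
  have hba : b ≠ a := by simpa using hb.2
  have hcmem := hcc.2
  have hca : c ≠ a := fun h => hcmem (by simp [h] : c ∈ insert b ({a} : Set V))
  have hcb : c ≠ b := fun h => hcmem (by simp [h] : c ∈ insert b ({a} : Set V))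
  exact ⟨⟨a, ha⟩, ⟨b, hb.1⟩, ⟨c, hcc.1⟩,
    fun h => hba (congrArg Subtype.val h).symm,
    fun h => hca (congrArg Subtype.val h).symm,
    fun h => hcb (congrArg Subtype.val h).symm⟩

lemma core_twoConnected (hvs : VsGe Γ 2) : TwoConnected (coreSub Γ).coe :=
  ⟨core_connected hc hinfV hlf hR₀, core_three hc hinfV hlf hR₀,
    core_remove hc hinfV hlf hR₀ hvs⟩

omit hc hinfV hlf hR₀ in
lemma verts_subset_core {L : Γ.Subgraph} (hLi : L.verts.Infinite)
    (hL2 : TwoConnected L.coe) : L.verts ⊆ CoreS Γ := by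
  intro x hx v hpck
  obtain ⟨y, hy⟩ := (hLi.diff ((hpck.2).union (Set.finite_singleton v))).nonempty
  have hyL : y ∈ L.verts := hy.1
  have hyC : y ∉ Cpt Γ {v} x := fun h => hy.2 (Or.inl h)
  have hyv : y ≠ v := fun h => hy.2 (Or.inr (by simp [h]))
  obtain ⟨Wc⟩ := hL2.1.preconnected ⟨x, hx⟩ ⟨y, hyL⟩
  obtain ⟨W, _, hWL⟩ := proj_walk Wc
  have hvW : v ∈ W.support := by
    by_contra hv
    refine hyC ⟨W, ?_⟩
    intro t ht
    simp only [Set.mem_singleton_iff]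
    rintro rfl
    exact hv ht
  obtain ⟨hvL, _⟩ := hWL v hvW
  have hconn := hL2.2.2 ⟨v, hvL⟩
  have hxne : (⟨x, hx⟩ : ↥L.verts) ≠ ⟨v, hvL⟩ := fun h => hpck.1 (congrArg Subtype.val h)
  have hyne : (⟨y, hyL⟩ : ↥L.verts) ≠ ⟨v, hvL⟩ := fun h => hyv (congrArg Subtype.val h)
  obtain ⟨P⟩ := hconn.preconnected ⟨⟨x, hx⟩, hxne⟩ ⟨⟨y, hyL⟩, hyne⟩
  obtain ⟨Q, hQ⟩ := induce_proj_walk P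
  obtain ⟨W'', _, hW''⟩ := proj_walk Q
  refine hyC ⟨W'', ?_⟩
  intro t ht
  simp only [Set.mem_singleton_iff]
  intro heq
  obtain ⟨ht1, ht2⟩ := hW'' t ht
  obtain ⟨hs, _⟩ := hQ _ ht2
  apply hs
  apply Subtype.ext
  exact heq

end Aux
end Aux10
open Paper in
theorem stmt4 {V G₀ : Type*} [Group G₀] (Γ : SimpleGraph V)
    (hinf : Infinite V) (hc : Γ.Connected) (hlf : LocFin Γ)
    (l B : ℝ) (hl : 1 ≤ l) (hB : 0 ≤ B)
    (φ : G₀ → V → V) (hqa : IsQAct Γ l φ) (hcb : Cobdd Γ B φ)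
    (hvs : VsGe Γ 2) :
    ∃ Γ₀ : Γ.Subgraph,
      (Γ₀.verts.Infinite ∧ TwoConnected Γ₀.coe ∧
        ∀ L : Γ.Subgraph, L.verts.Infinite → TwoConnected L.coe → Γ₀ ≤ L → L = Γ₀) ∧
      (∀ L : Γ.Subgraph,
        (L.verts.Infinite ∧ TwoConnected L.coe ∧
          ∀ L' : Γ.Subgraph, L'.verts.Infinite → TwoConnected L'.coe → L ≤ L' → L' = L) →
        L = Γ₀) ∧
      (∃ C : ℝ, 0 ≤ C ∧ ∀ v : V, ∃ w ∈ Γ₀.verts, (Γ.dist v w : ℝ) ≤ C) ∧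
      (∃ l' e' : ℝ, 1 ≤ l' ∧ 0 ≤ e' ∧ IsQI Γ₀.coe Γ l' e' (fun v => (v : V))) := by
  classical
  obtain ⟨R₀, hR₀⟩ := Aux.depth_bound hc hlf hl hqa hcb
  have hCi : (CoreS Γ).Infinite := Aux.core_infinite hc hinf hlf hR₀
  have h2c : TwoConnected (coreSub Γ).coe := Aux.core_twoConnected hc hinf hlf hR₀ hvs
  have hle : ∀ (L : Γ.Subgraph), L.verts.Infinite → TwoConnected L.coe → L ≤ coreSub Γ := by
    intro L hLi hL2
    refine ⟨Aux.verts_subset_core hLi hL2, ?_⟩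
    intro a b hab
    exact ⟨L.adj_sub hab, Aux.verts_subset_core hLi hL2 (L.edge_vert hab),
      Aux.verts_subset_core hLi hL2 (L.edge_vert hab.symm)⟩
  refine ⟨coreSub Γ, ⟨hCi, h2c, ?_⟩, ?_, ?_, ?_⟩
  · intro L hLi hL2 hΓL
    exact le_antisymm (hle L hLi hL2) hΓL
  · rintro L ⟨hLi, hL2, hLmax⟩
    exact (hLmax (coreSub Γ) hCi h2c (hle L hLi hL2)).symm
  · refine ⟨(R₀ : ℝ), Nat.cast_nonneg _, ?_⟩
    intro v
    obtain ⟨w, hw, hd⟩ := Aux.core_dense hc hinf hlf hR₀ v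
    exact ⟨w, hw, by exact_mod_cast hd⟩
  · refine ⟨1, (R₀ : ℝ), le_refl 1, Nat.cast_nonneg _, ?_, ?_⟩
    · intro x y
      have hde := Aux.core_dist_eq hc hinf hlf hR₀ x y
      constructor
      · rw [hde, div_one]
        exact sub_le_self _ (Nat.cast_nonneg _)
      · rw [hde, one_mul]
        exact le_add_of_nonneg_right (Nat.cast_nonneg _)
    · intro w
      obtain ⟨u, hu, hd⟩ := Aux.core_dense hc hinf hlf hR₀ w
      exact ⟨⟨u, hu⟩, by exact_mod_cast hd⟩
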